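/- Let D be a Polish space, μ a probability measure on a measurable space (S, 𝒮), and Q₁, Q₂ probability kernels from S to D. If ∫_S (Q₁(s,·) × Q₂(s,·))(Δ) μ(ds) = 1, where Δ = {(y₁,y₂) ∈ D×D : y₁ = y₂} is the diagonal, then there exists a μ-null set N ∈ 𝒮 and a function k : S → D such that Q₁(s, {k(s)}) = Q₂(s, {k(s)}) = 1 for all s ∉ N. -/

import Mathlib

open MeasureTheory ProbabilityTheory
open scoped ENNReal

lemma aux_full_atom {D : Type*} [MeasurableSpace D]
    [TopologicalSpace D] [PolishSpace D] [BorelSpace D]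
    (ν₁ ν₂ : Measure D) [IsProbabilityMeasure ν₁] [IsProbabilityMeasure ν₂]
    (h : ν₁.prod ν₂ {p : D × D | p.1 = p.2} = 1) :
    ∃ y : D, ν₁ {y} = 1 ∧ ν₂ {y} = 1 := by
  letI := TopologicalSpace.upgradeIsCompletelyMetrizable D
  have hdiag : MeasurableSet {p : D × D | p.1 = p.2} :=
    (isClosed_eq continuous_fst continuous_snd).measurableSet
  have hmeas : Measurable fun y => ν₂ {y} := by
    have := measurable_measure_prodMk_left (ν := ν₂) hdiag
    convert this using 2 with y
    congr 1
    ext z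
    simp [eq_comm]
  have hprod : ∫⁻ y, ν₂ {y} ∂ν₁ = 1 := by
    rw [Measure.prod_apply hdiag] at h
    convert h using 2 with y
    ext z
    simp [eq_comm]
  -- the integrand is ≤ 1 with integral 1 over a probability measure
  have hle : ∀ y, ν₂ {y} ≤ 1 := fun y => prob_le_one
  have hae : ∀ᵐ y ∂ν₁, ν₂ {y} = 1 := by
    have hz : ∫⁻ y, (1 - ν₂ {y}) ∂ν₁ = 0 := by
      rw [lintegral_sub hmeas (by simp [hprod]) (Filter.Eventually.of_forall hle)]
      simp [hprod]
    have := (lintegral_eq_zero_iff ((measurable_const).sub hmeas)).mp hz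
    filter_upwards [this] with y hy
    have : (1 : ℝ≥0∞) - ν₂ {y} = 0 := hy
    have := tsub_eq_zero_iff_le.mp this
    exact le_antisymm (hle y) this
  have hset : ν₁ {y | ν₂ {y} = 1} = 1 := by
    have hcompl : ν₁ {y | ν₂ {y} = 1}ᶜ = 0 := hae
    have h1 : (1 : ℝ≥0∞) = ν₁ Set.univ := (measure_univ).symm
    have := measure_union_le (μ := ν₁) {y | ν₂ {y} = 1} {y | ν₂ {y} = 1}ᶜ
    rw [Set.union_compl_self, hcompl, add_zero] at this
    exact le_antisymm prob_le_one (h1 ▸ this)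
  have hne : {y | ν₂ {y} = 1}.Nonempty := by
    rw [Set.nonempty_iff_ne_empty]
    intro hemp
    rw [hemp] at hset
    simp at hset
  obtain ⟨y₀, hy₀⟩ := hne
  refine ⟨y₀, ?_, hy₀⟩
  have hsub : {y | ν₂ {y} = 1} ⊆ {y₀} := by
    intro y hy
    by_contra hne'
    have hdisj : Disjoint ({y} : Set D) {y₀} := by
      simp only [Set.disjoint_singleton]
      exact fun hc => hne' (by simp [hc])
    have : ν₂ ({y} ∪ {y₀}) = 2 := by
      rw [measure_union hdisj (measurableSet_singleton y₀), hy, hy₀]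
      norm_num
    have hle2 : ν₂ ({y} ∪ {y₀}) ≤ 1 := prob_le_one
    rw [this] at hle2
    norm_num at hle2
  exact le_antisymm prob_le_one (hset ▸ measure_mono hsub)

/-- If the product kernels put full mass on the diagonal in integral (i.e. on
μ-average), then outside a μ-null set there is a common full-mass atom `k s`
of both kernels. -/
theorem exists_selection_of_integral_prod_diagonal_eq_one
    {S D : Type*} [MeasurableSpace S] [MeasurableSpace D]
    [TopologicalSpace D] [PolishSpace D] [BorelSpace D]
    (μ : Measure S) [IsProbabilityMeasure μ]
    (Q₁ Q₂ : Kernel S D) [IsMarkovKernel Q₁] [IsMarkovKernel Q₂]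
    (h : ∫⁻ s, ((Q₁ s).prod (Q₂ s)) {p : D × D | p.1 = p.2} ∂μ = 1) :
    ∃ (N : Set S) (k : S → D), MeasurableSet N ∧ μ N = 0 ∧
      ∀ s ∉ N, Q₁ s {k s} = 1 ∧ Q₂ s {k s} = 1 := by
  letI := TopologicalSpace.upgradeIsCompletelyMetrizable D
  have hS : Nonempty S := by
    by_contra hS
    rw [not_nonempty_iff] at hS
    have : μ Set.univ = 1 := measure_univ
    rw [Set.univ_eq_empty_iff.mpr ⟨fun s => (hS.false s)⟩] at this
    simp at this
  obtain ⟨s₀⟩ := hS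
  have hD : Nonempty D := by
    by_contra hD
    rw [not_nonempty_iff] at hD
    have : (Q₁ s₀) Set.univ = 1 := measure_univ
    rw [Set.univ_eq_empty_iff.mpr ⟨fun d => (hD.false d)⟩] at this
    simp at this
  have hdiag : MeasurableSet {p : D × D | p.1 = p.2} :=
    (isClosed_eq continuous_fst continuous_snd).measurableSet
  set f : S → ℝ≥0∞ := fun s => ((Q₁ s).prod (Q₂ s)) {p : D × D | p.1 = p.2} with hf
  have hfm : Measurable f := by
    have : Measurable fun s => (Q₁ ×ₖ Q₂) s {p : D × D | p.1 = p.2} :=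
      Kernel.measurable_coe _ hdiag
    simpa [Kernel.prod_apply] using this
  have hfle : ∀ s, f s ≤ 1 := fun s => prob_le_one
  have hae : ∀ᵐ s ∂μ, f s = 1 := by
    have hz : ∫⁻ s, (1 - f s) ∂μ = 0 := by
      rw [lintegral_sub hfm (by simp [h]) (Filter.Eventually.of_forall hfle)]
      simp [h]
    have := (lintegral_eq_zero_iff ((measurable_const).sub hfm)).mp hz
    filter_upwards [this] with s hs
    exact le_antisymm (hfle s) (tsub_eq_zero_iff_le.mp hs)
  classical
  refine ⟨{s | f s ≠ 1}, fun s =>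
      if hs : ∃ y : D, Q₁ s {y} = 1 ∧ Q₂ s {y} = 1 then hs.choose else Classical.arbitrary D,
      ?_, ?_, ?_⟩
  · exact (hfm (measurableSet_singleton 1)).compl
  · exact hae
  · intro s hs
    simp only [Set.mem_setOf_eq, not_not] at hs
    have hex : ∃ y : D, Q₁ s {y} = 1 ∧ Q₂ s {y} = 1 := aux_full_atom _ _ hs
    simp only [dif_pos hex]
    exact hex.choose_spec
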